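/- Define γ : Ω → 𝒮² by γ(p) = (Re(p) × Im(p)) / (|Re(p)| · |Im(p)|), where a point of the absolute conic is written [0 : p] with p ∈ ℂ³ satisfying p·p = 0. Then γ is well-defined (independent of the choice of homogeneous representative and landing in the unit sphere), and for every rotation φ ∈ SO(3), acting on Ω via its complexification and on 𝒮² standardly, one has γ ∘ φ = φ ∘ γ. -/

import Mathlib

open Complex

/-- Real part of a vector in `ℂ³`. -/
def reV (p : Fin 3 → ℂ) : Fin 3 → ℝ := fun i => (p i).re

/-- Imaginary part of a vector in `ℂ³`. -/
def imV (p : Fin 3 → ℂ) : Fin 3 → ℝ := fun i => (p i).im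

/-- Euclidean norm on `ℝ³`. -/
noncomputable def enorm3 (v : Fin 3 → ℝ) : ℝ := Real.sqrt (∑ i, v i ^ 2)

/-- The map `γ : Ω → 𝒮²`, `γ(p) = (Re p × Im p)/(|Re p|·|Im p|)`, on homogeneous
coordinate vectors `p ∈ ℂ³` of points `[0:p]` of the absolute conic. -/
noncomputable def gammaMap (p : Fin 3 → ℂ) : Fin 3 → ℝ :=
  (1 / (enorm3 (reV p) * enorm3 (imV p))) • (crossProduct (reV p) (imV p))

/- ### Auxiliary lemmas -/

/-- Real part of the conic equation: `|Re p|² = |Im p|²`. -/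
lemma conic_re (p : Fin 3 → ℂ) (h : (∑ i, p i ^ 2) = 0) :
    (∑ i, reV p i ^ 2) = ∑ i, imV p i ^ 2 := by
  have := congrArg Complex.re h
  simp [Fin.sum_univ_three, pow_two, Complex.mul_re, reV, imV] at this ⊢
  ring_nf at this ⊢
  linarith

/-- Imaginary part of the conic equation: `Re p ⬝ Im p = 0`. -/
lemma conic_im (p : Fin 3 → ℂ) (h : (∑ i, p i ^ 2) = 0) :
    (∑ i, reV p i * imV p i) = 0 := by
  have := congrArg Complex.im h
  simp [Fin.sum_univ_three, pow_two, Complex.mul_im, reV, imV] at this ⊢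
  ring_nf at this ⊢
  linarith

/-- On the conic, the real part of a nonzero representative is nonzero. -/
lemma conic_pos (p : Fin 3 → ℂ) (hp : p ≠ 0) (h : (∑ i, p i ^ 2) = 0) :
    0 < ∑ i, reV p i ^ 2 := by
  obtain ⟨i, hi⟩ : ∃ i, p i ≠ 0 := by
    by_contra hc
    push_neg at hc
    exact hp (funext hc)
  have h1 : 0 < ∑ i, (reV p i ^ 2 + imV p i ^ 2) := by
    apply Finset.sum_pos' (fun j _ => by positivity) ⟨i, Finset.mem_univ i, ?_⟩
    have : (p i).re ≠ 0 ∨ (p i).im ≠ 0 := by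
      by_contra hc
      push_neg at hc
      exact hi (Complex.ext hc.1 hc.2)
    rcases this with h' | h' <;> simp [reV, imV] <;> positivity
  rw [Finset.sum_add_distrib] at h1
  rw [conic_re p h] at h1 ⊢
  linarith

/-- Lagrange's identity in `ℝ³`. -/
lemma lagrange (a b : Fin 3 → ℝ) :
    ∑ i, (crossProduct a b) i ^ 2 = (∑ i, a i ^ 2) * (∑ i, b i ^ 2) - (∑ i, a i * b i) ^ 2 := by
  simp [crossProduct, Fin.sum_univ_three]
  ring

section Rot
variable (M : Matrix (Fin 3) (Fin 3) ℝ)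

/-- An orthogonal matrix is injective (via its transpose) on vectors. -/
lemma rot_inj (hM : M.transpose * M = 1) :
    ∀ v : Fin 3 → ℝ, M.transpose.mulVec v = 0 → v = 0 := by
  intro v hv
  have h2 : M.mulVec (M.transpose.mulVec v) = 0 := by rw [hv]; simp
  rwa [Matrix.mulVec_mulVec, mul_eq_one_comm.mp hM, Matrix.one_mulVec] at h2

/-- Columns of an orthogonal matrix are orthonormal. -/
lemma rot_entries (hM : M.transpose * M = 1) (j k : Fin 3) :
    (∑ i, M i j * M i k) = if j = k then 1 else 0 := by
  have := congrFun (congrFun hM j) k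
  simpa [Matrix.mul_apply, Matrix.transpose_apply, Matrix.one_apply] using this

/-- An orthogonal matrix preserves the sum of squares. -/
lemma rot_norm (hM : M.transpose * M = 1) (v : Fin 3 → ℝ) :
    (∑ i, (M.mulVec v) i ^ 2) = ∑ i, v i ^ 2 := by
  have e00 := rot_entries M hM 0 0
  have e11 := rot_entries M hM 1 1
  have e22 := rot_entries M hM 2 2
  have e01 := rot_entries M hM 0 1
  have e02 := rot_entries M hM 0 2
  have e12 := rot_entries M hM 1 2
  simp only [Fin.sum_univ_three, Fin.reduceEq, ite_true, ite_false, reduceIte]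
    at e00 e11 e22 e01 e02 e12
  simp only [Matrix.mulVec, dotProduct, Fin.sum_univ_three]
  linear_combination v 0 ^ 2 * e00 + v 1 ^ 2 * e11 + v 2 ^ 2 * e22 +
    2 * v 0 * v 1 * e01 + 2 * v 0 * v 2 * e02 + 2 * v 1 * v 2 * e12

/-- For `M ∈ SO(3)`, each column is the cross product of the other two (cyclically). -/
lemma rot_cols (hM : M.transpose * M = 1) (hdet : M.det = 1) :
    (crossProduct (fun i => M i 0) (fun i => M i 1) = fun i => M i 2)
    ∧ (crossProduct (fun i => M i 1) (fun i => M i 2) = fun i => M i 0)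
    ∧ (crossProduct (fun i => M i 2) (fun i => M i 0) = fun i => M i 1) := by
  have e00 := rot_entries M hM 0 0
  have e11 := rot_entries M hM 1 1
  have e22 := rot_entries M hM 2 2
  have e01 := rot_entries M hM 0 1
  have e02 := rot_entries M hM 0 2
  have e12 := rot_entries M hM 1 2
  simp only [Fin.sum_univ_three, Fin.reduceEq, ite_true, ite_false, reduceIte]
    at e00 e11 e22 e01 e02 e12
  rw [Matrix.det_fin_three] at hdet
  refine ⟨sub_eq_zero.mp (rot_inj M hM _ ?_), sub_eq_zero.mp (rot_inj M hM _ ?_),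
    sub_eq_zero.mp (rot_inj M hM _ ?_)⟩ <;> funext k
  · fin_cases k
    · simp [crossProduct, Matrix.mulVec, dotProduct, Matrix.transpose_apply,
        Fin.sum_univ_three]
      linear_combination -e02
    · simp [crossProduct, Matrix.mulVec, dotProduct, Matrix.transpose_apply,
        Fin.sum_univ_three]
      linear_combination -e12
    · simp [crossProduct, Matrix.mulVec, dotProduct, Matrix.transpose_apply,
        Fin.sum_univ_three]
      linear_combination hdet - e22
  · fin_cases k
    · simp [crossProduct, Matrix.mulVec, dotProduct, Matrix.transpose_apply,
        Fin.sum_univ_three]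
      linear_combination hdet - e00
    · simp [crossProduct, Matrix.mulVec, dotProduct, Matrix.transpose_apply,
        Fin.sum_univ_three]
      linear_combination -e01
    · simp [crossProduct, Matrix.mulVec, dotProduct, Matrix.transpose_apply,
        Fin.sum_univ_three]
      linear_combination -e02
  · fin_cases k
    · simp [crossProduct, Matrix.mulVec, dotProduct, Matrix.transpose_apply,
        Fin.sum_univ_three]
      linear_combination -e01
    · simp [crossProduct, Matrix.mulVec, dotProduct, Matrix.transpose_apply,
        Fin.sum_univ_three]
      linear_combination hdet - e11
    · simp [crossProduct, Matrix.mulVec, dotProduct, Matrix.transpose_apply,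
        Fin.sum_univ_three]
      linear_combination -e12

end Rot

/-- Equivariance of the cross product under `SO(3)`:
`(Ma) × (Mb) = M (a × b)`. -/
lemma rot_cross (M : Matrix (Fin 3) (Fin 3) ℝ) (hM : M.transpose * M = 1) (hdet : M.det = 1)
    (a b : Fin 3 → ℝ) :
    crossProduct (M.mulVec a) (M.mulVec b) = M.mulVec (crossProduct a b) := by
  obtain ⟨h01, h12, h20⟩ := rot_cols M hM hdet
  funext i
  fin_cases i <;>
  · first
    | (have t01 := congrFun h01 0; have t12 := congrFun h12 0; have t20 := congrFun h20 0
       simp [crossProduct] at t01 t12 t20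
       simp [crossProduct, Matrix.mulVec, dotProduct, Fin.sum_univ_three]
       linear_combination (a 0 * b 1 - a 1 * b 0) * t01 + (a 1 * b 2 - a 2 * b 1) * t12 +
         (a 2 * b 0 - a 0 * b 2) * t20)
    | (have t01 := congrFun h01 1; have t12 := congrFun h12 1; have t20 := congrFun h20 1
       simp [crossProduct] at t01 t12 t20
       simp [crossProduct, Matrix.mulVec, dotProduct, Fin.sum_univ_three]
       linear_combination (a 0 * b 1 - a 1 * b 0) * t01 + (a 1 * b 2 - a 2 * b 1) * t12 +
         (a 2 * b 0 - a 0 * b 2) * t20)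
    | (have t01 := congrFun h01 2; have t12 := congrFun h12 2; have t20 := congrFun h20 2
       simp [crossProduct] at t01 t12 t20
       simp [crossProduct, Matrix.mulVec, dotProduct, Fin.sum_univ_three]
       linear_combination (a 0 * b 1 - a 1 * b 0) * t01 + (a 1 * b 2 - a 2 * b 1) * t12 +
         (a 2 * b 0 - a 0 * b 2) * t20)

/-- `γ` is well defined on the absolute conic (independent of the
homogeneous representative, with values on the unit sphere) and is `SO(3)`-equivariant:
`γ ∘ φ = φ ∘ γ` for every rotation `φ`, acting on `Ω` via complexification. -/
theorem gammaMap_well_defined_and_equivariant :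
    -- independence of the representative:
    (∀ p : Fin 3 → ℂ, p ≠ 0 → (∑ i, p i ^ 2) = 0 →
      ∀ c : ℂ, c ≠ 0 → gammaMap (c • p) = gammaMap p) ∧
    -- values lie on the unit sphere:
    (∀ p : Fin 3 → ℂ, p ≠ 0 → (∑ i, p i ^ 2) = 0 →
      (∑ i, gammaMap p i ^ 2) = 1) ∧
    -- `SO(3)`-equivariance:
    (∀ p : Fin 3 → ℂ, p ≠ 0 → (∑ i, p i ^ 2) = 0 →
      ∀ M : Matrix (Fin 3) (Fin 3) ℝ, M.transpose * M = 1 → M.det = 1 →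
        gammaMap (fun i => ∑ j, (M i j : ℂ) * p j) = M.mulVec (gammaMap p)) := by
  refine ⟨?_, ?_, ?_⟩
  · -- independence of the representative
    intro p _ hsum c hc
    have hre := conic_re p hsum
    have him := conic_im p hsum
    set a := reV p with ha
    set b := imV p with hb
    set x := c.re
    set y := c.im
    have hk : 0 < x ^ 2 + y ^ 2 := by
      have := Complex.normSq_pos.mpr hc
      rw [Complex.normSq_apply] at this
      nlinarith
    have hra : reV (c • p) = fun i => x * a i - y * b i := by
      funext i
      simp [reV, ha, hb, imV, Complex.mul_re]
      rfl
    have hia : imV (c • p) = fun i => x * b i + y * a i := by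
      funext i
      simp [reV, imV, ha, hb, Complex.mul_im]
      rfl
    have hcross : crossProduct (fun i => x * a i - y * b i) (fun i => x * b i + y * a i)
        = (x ^ 2 + y ^ 2) • (crossProduct a b) := by
      funext i
      fin_cases i <;> simp [crossProduct] <;> ring
    have hs1 : (∑ i, (x * a i - y * b i) ^ 2) = (x ^ 2 + y ^ 2) * ∑ i, a i ^ 2 := by
      simp only [Fin.sum_univ_three] at hre him ⊢
      linear_combination (-(y ^ 2)) * hre - 2 * x * y * him
    have hs2 : (∑ i, (x * b i + y * a i) ^ 2) = (x ^ 2 + y ^ 2) * ∑ i, b i ^ 2 := by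
      simp only [Fin.sum_univ_three] at hre him ⊢
      linear_combination (y ^ 2) * hre + 2 * x * y * him
    have hea : enorm3 (fun i => x * a i - y * b i)
        = Real.sqrt (x ^ 2 + y ^ 2) * enorm3 a := by
      rw [enorm3, enorm3, hs1, Real.sqrt_mul hk.le]
    have heb : enorm3 (fun i => x * b i + y * a i)
        = Real.sqrt (x ^ 2 + y ^ 2) * enorm3 b := by
      rw [enorm3, enorm3, hs2, Real.sqrt_mul hk.le]
    rw [gammaMap, gammaMap, hra, hia, hcross, hea, heb, ← ha, ← hb]
    have hsq : Real.sqrt (x ^ 2 + y ^ 2) * Real.sqrt (x ^ 2 + y ^ 2) = x ^ 2 + y ^ 2 :=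
      Real.mul_self_sqrt hk.le
    funext i
    simp only [Pi.smul_apply, smul_eq_mul]
    rw [show Real.sqrt (x ^ 2 + y ^ 2) * enorm3 a * (Real.sqrt (x ^ 2 + y ^ 2) * enorm3 b)
        = (x ^ 2 + y ^ 2) * (enorm3 a * enorm3 b) by
      linear_combination enorm3 a * enorm3 b * hsq]
    rcases eq_or_ne (enorm3 a * enorm3 b) 0 with h | h
    · simp [h]
    · field_simp
  · -- values lie on the unit sphere
    intro p hp hsum
    have hre := conic_re p hsum
    have him := conic_im p hsum
    have hpos := conic_pos p hp hsum
    have hpos' : 0 < ∑ i, imV p i ^ 2 := hre ▸ hpos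
    have hNa : enorm3 (reV p) ^ 2 = ∑ i, reV p i ^ 2 := Real.sq_sqrt (le_of_lt hpos)
    have hNb : enorm3 (imV p) ^ 2 = ∑ i, imV p i ^ 2 := Real.sq_sqrt (le_of_lt hpos')
    have hNa0 : enorm3 (reV p) ≠ 0 := by
      intro h; rw [h] at hNa; simp at hNa; linarith
    have hNb0 : enorm3 (imV p) ≠ 0 := by
      intro h; rw [h] at hNb; simp at hNb; linarith
    have key : ∑ i, gammaMap p i ^ 2
        = (1 / (enorm3 (reV p) * enorm3 (imV p))) ^ 2
          * ∑ i, (crossProduct (reV p) (imV p)) i ^ 2 := by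
      simp [gammaMap, Finset.mul_sum]
      ring_nf
    rw [key, lagrange, him]
    field_simp
    rw [hNa, hNb]
    ring
  · -- SO(3)-equivariance
    intro p _ _ M hM hdet
    have hrm : reV (fun i => ∑ j, (M i j : ℂ) * p j) = M.mulVec (reV p) := by
      funext i
      simp [reV, Matrix.mulVec, dotProduct, Fin.sum_univ_three, Complex.add_re,
        Complex.mul_re]
    have him : imV (fun i => ∑ j, (M i j : ℂ) * p j) = M.mulVec (imV p) := by
      funext i
      simp [imV, Matrix.mulVec, dotProduct, Fin.sum_univ_three, Complex.add_im,
        Complex.mul_im]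
    have hna : enorm3 (M.mulVec (reV p)) = enorm3 (reV p) := by
      rw [enorm3, enorm3, rot_norm M hM]
    have hnb : enorm3 (M.mulVec (imV p)) = enorm3 (imV p) := by
      rw [enorm3, enorm3, rot_norm M hM]
    rw [gammaMap, gammaMap, hrm, him, rot_cross M hM hdet, hna, hnb, Matrix.mulVec_smul]
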